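/- Let l, p be distinct odd primes with p ≡ 1 mod 4 and (p/l) = -1. Then the equation y² = l + p·l·x⁴ has no solutions x, y ∈ ℚ_p. -/

import Mathlib

open Polynomial

/-- A `p`-adic integer close to `1` is a square (for `p` odd). -/
lemma aux_sq_of_near_one {p : ℕ} [Fact p.Prime] (hp2 : p ≠ 2) (u : ℤ_[p])
    (hu : ‖u - 1‖ < 1) : IsSquare u := by
  have h2 : ‖(2 : ℤ_[p])‖ = 1 := by
    refine le_antisymm (PadicInt.norm_le_one _) ?_
    by_contra hlt
    push_neg at hlt
    have : (p : ℤ) ∣ (2 : ℤ) := by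
      rw [← PadicInt.norm_int_lt_one_iff_dvd]
      simpa using hlt
    have hd2 : p ∣ 2 := by exact_mod_cast this
    exact hp2 ((Nat.prime_dvd_prime_iff_eq Fact.out Nat.prime_two).mp hd2)
  have hF : ‖(X ^ 2 - C u : ℤ_[p][X]).eval 1‖ <
      ‖((X ^ 2 - C u : ℤ_[p][X]).derivative).eval 1‖ ^ 2 := by
    have hder : ((X ^ 2 - C u : ℤ_[p][X]).derivative).eval 1 = 2 := by
      simp [derivative_sq]
    rw [hder, h2]
    simpa [Polynomial.eval_sub, norm_sub_rev] using hu
  obtain ⟨z, hz, -⟩ := hensels_lemma hF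
  simp only [map_sub, map_pow, Polynomial.aeval_X, Polynomial.aeval_C, Algebra.algebraMap_self,
    RingHom.id_apply, sub_eq_zero] at hz
  exact ⟨z, by rw [← hz]; ring⟩

/-- For `l`, `p` distinct odd primes with `p ≡ 1 mod 4` and `(p/l) = -1`, the equation
`y² = l + plx⁴` has no solutions in `ℚ_p`. -/
theorem stmt10 (l p : ℕ) [Fact p.Prime] (hl : l.Prime) (hlodd : l ≠ 2) (hne : l ≠ p)
    (hp4 : p % 4 = 1) (h : ¬ IsSquare ((p : ZMod l))) :
    ¬ ∃ x y : ℚ_[p], y ^ 2 = (l : ℚ_[p]) + (p : ℚ_[p]) * (l : ℚ_[p]) * x ^ 4 := by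
  haveI : Fact l.Prime := ⟨hl⟩
  have hpp : p.Prime := Fact.out
  have hp2 : p ≠ 2 := by omega
  have hpl : ¬ (p : ℤ) ∣ (l : ℤ) := by
    rw [Int.natCast_dvd_natCast]
    intro hd
    exact hne ((Nat.prime_dvd_prime_iff_eq hpp hl).mp hd).symm
  have hlnorm : ‖(l : ℚ_[p])‖ = 1 := by
    refine le_antisymm (by exact_mod_cast Padic.norm_int_le_one (l : ℤ)) ?_
    by_contra hlt
    push_neg at hlt
    exact hpl ((Padic.norm_intCast_lt_one_iff (k := (l : ℤ))).mp (by exact_mod_cast hlt))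
  have hl0 : (l : ℚ_[p]) ≠ 0 := by
    intro h0; rw [h0, norm_zero] at hlnorm; norm_num at hlnorm
  rintro ⟨x, y, hxy⟩
  by_cases hx : ‖x‖ ≤ 1
  · -- x is a p-adic integer; 1 + p x⁴ is a square, so l would be a square mod p
    set x' : ℤ_[p] := ⟨x, hx⟩ with hx'
    set u : ℤ_[p] := 1 + p * x' ^ 4 with hu
    have hunear : ‖u - 1‖ < 1 := by
      have : u - 1 = (p : ℤ_[p]) * x' ^ 4 := by rw [hu]; ring
      rw [this, norm_mul, norm_pow, PadicInt.norm_p]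
      calc ((p : ℝ))⁻¹ * ‖x'‖ ^ 4 ≤ (p : ℝ)⁻¹ * 1 := by
            have hx1 : ‖x'‖ ^ 4 ≤ 1 := pow_le_one₀ (norm_nonneg _) (PadicInt.norm_le_one x')
            have hpos : (0:ℝ) ≤ (p : ℝ)⁻¹ := by positivity
            nlinarith
        _ < 1 := by
            rw [mul_one, inv_lt_one_iff₀]
            right; exact_mod_cast hpp.one_lt
    obtain ⟨z, hz⟩ := aux_sq_of_near_one hp2 u hunear
    have hz0 : (z : ℚ_[p]) ≠ 0 := by
      intro h0
      have hz0' : z = 0 := (PadicInt.coe_eq_zero (x := z)).mp h0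
      rw [hz0', mul_zero] at hz
      rw [hz] at hunear
      simp at hunear
    have hucoe : ((u : ℚ_[p])) = 1 + (p : ℚ_[p]) * x ^ 4 := by
      push_cast [hu]
      rfl
    have hyz : (y / z) ^ 2 = (l : ℚ_[p]) := by
      have : y ^ 2 = (l : ℚ_[p]) * (u : ℚ_[p]) := by
        rw [hucoe, hxy]; ring
      rw [hz] at this
      push_cast at this
      field_simp
      rw [this]; ring
    have hwnorm : ‖y / z‖ ≤ 1 := by
      nlinarith [norm_nonneg (y / z), sq_abs (‖y / z‖),
        (by rw [← norm_pow, hyz, hlnorm] : ‖y / z‖ ^ 2 = 1)]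
    set w : ℤ_[p] := ⟨y / z, hwnorm⟩ with hw
    have hwsq : w ^ 2 = (l : ℤ_[p]) := by
      apply Subtype.ext
      push_cast
      exact hyz
    have : IsSquare ((l : ZMod p)) := by
      refine ⟨PadicInt.toZMod w, ?_⟩
      have := congrArg (PadicInt.toZMod (p := p)) hwsq
      rw [map_pow, map_natCast] at this
      rw [← this]; ring
    rw [ZMod.exists_sq_eq_prime_iff_of_mod_four_eq_one hp4 hlodd] at this
    exact h this
  · -- ‖x‖ > 1 : valuation parity contradiction
    push_neg at hx
    have hx0 : x ≠ 0 := by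
      intro h0; rw [h0, norm_zero] at hx; norm_num at hx
    have hp1R : (1 : ℝ) < (p : ℝ) := by exact_mod_cast hpp.one_lt
    have hvx : x.valuation < 0 := by
      rw [Padic.norm_eq_zpow_neg_valuation hx0] at hx
      by_contra hge
      push_neg at hge
      have : ((p : ℝ) ^ (-x.valuation) : ℝ) ≤ 1 := by
        apply zpow_le_one_of_nonpos₀ (le_of_lt hp1R)
        omega
      linarith
    have hvl : (l : ℚ_[p]).valuation = 0 := by
      rw [Padic.valuation_natCast, padicValNat.eq_zero_of_not_dvd]
      · simp
      · intro hd; exact hpl (Int.natCast_dvd_natCast.mpr hd)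
    set b : ℚ_[p] := (p : ℚ_[p]) * (l : ℚ_[p]) * x ^ 4 with hb
    have hp0 : (p : ℚ_[p]) ≠ 0 := Nat.cast_ne_zero.mpr hpp.ne_zero
    have hb0 : b ≠ 0 := by
      rw [hb]
      exact mul_ne_zero (mul_ne_zero hp0 hl0) (pow_ne_zero 4 hx0)
    have hvb : b.valuation = 1 + 4 * x.valuation := by
      rw [hb, Padic.valuation_mul (mul_ne_zero hp0 hl0) (pow_ne_zero 4 hx0),
        Padic.valuation_mul hp0 hl0, Padic.valuation_p, hvl]
      have : (x ^ 4).valuation = 4 * x.valuation := by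
        have h2 : x ^ 4 = x * x * (x * x) := by ring
        rw [h2, Padic.valuation_mul (mul_ne_zero hx0 hx0) (mul_ne_zero hx0 hx0),
          Padic.valuation_mul hx0 hx0]
        ring
      rw [this]; ring
    have hbnorm : ‖b‖ = (p : ℝ) ^ (-(1 + 4 * x.valuation)) := by
      rw [Padic.norm_eq_zpow_neg_valuation hb0, hvb]
    have hnormne : ‖(l : ℚ_[p])‖ ≠ ‖b‖ := by
      rw [hlnorm, hbnorm]
      intro heq
      have := zpow_right_injective₀ (a := (p : ℝ)) (by positivity) hp1R.ne'
        (a₁ := (0 : ℤ)) (a₂ := -(1 + 4 * x.valuation)) (by simpa using heq)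
      omega
    have hsum : ‖(l : ℚ_[p]) + b‖ = ‖b‖ := by
      rw [Padic.add_eq_max_of_ne hnormne, max_eq_right]
      rw [hlnorm, hbnorm]
      calc (1 : ℝ) = (p : ℝ) ^ (0 : ℤ) := by simp
        _ ≤ (p : ℝ) ^ (-(1 + 4 * x.valuation)) := by
            apply zpow_le_zpow_right₀ (le_of_lt hp1R)
            omega
    have hy0 : y ≠ 0 := by
      intro h0
      rw [h0] at hxy
      have h1 : ‖(l : ℚ_[p]) + b‖ = 0 := by rw [← hxy]; simp
      rw [hsum, hbnorm] at h1
      have : (0:ℝ) < (p : ℝ) ^ (-(1 + 4 * x.valuation)) := by positivity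
      linarith
    have hysq : (y ^ 2).valuation = 2 * y.valuation := by
      rw [pow_two, Padic.valuation_mul hy0 hy0]; ring
    have hfinal : (p : ℝ) ^ (-(2 * y.valuation)) = (p : ℝ) ^ (-(1 + 4 * x.valuation)) := by
      rw [← hysq, ← Padic.norm_eq_zpow_neg_valuation (pow_ne_zero 2 hy0), hxy, hsum, hbnorm]
    have := zpow_right_injective₀ (a := (p : ℝ)) (by positivity) hp1R.ne' hfinal
    omega
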